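/- For i with 0 ≤ i ≤ n and j = n+1−i, the glue vector [i] of A_n, having j coordinates equal to i/(n+1) followed by i coordinates equal to −j/(n+1), lies in the dual lattice A_n^#, and Q([i]) = ij/(n+1). Moreover [i] is a vector of minimal norm in its coset [i] + A_n of A_n^#/A_n. -/

import Mathlib

/-- Membership in the root lattice `A_n = {x ∈ ℤ^{n+1} : Σ x_i = 0}`, viewed inside
`ℚ^{n+1}` with the standard quadratic form. -/
def AMem (n : ℕ) (x : Fin (n + 1) → ℚ) : Prop :=
  (∀ i, ∃ m : ℤ, x i = m) ∧ ∑ i, x i = 0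

/-- The glue vector `[i]` of `A_n`: `n+1-i` coordinates equal to `i/(n+1)` followed
by `i` coordinates equal to `-(n+1-i)/(n+1)`. -/
def glueA (n i : ℕ) : Fin (n + 1) → ℚ := fun k =>
  if (k : ℕ) < n + 1 - i then (i : ℚ) / (n + 1)
  else -(((n + 1 - i : ℕ) : ℚ)) / (n + 1)

theorem sum_ite_const' (n j : ℕ) (hj : j ≤ n + 1) (a b : ℚ) :
    ∑ k : Fin (n+1), (if (k : ℕ) < j then a else b) = j * a + (n+1-j : ℕ) * b := by
  rw [Fin.sum_univ_eq_sum_range (fun k => if k < j then a else b), Finset.range_eq_Ico,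
    ← Finset.sum_Ico_consecutive _ (Nat.zero_le j) hj,
    Finset.sum_congr rfl (g := fun _ => a) (fun k hk => by
      simp only [Finset.mem_Ico] at hk; simp [hk.2]),
    Finset.sum_congr (rfl : Finset.Ico j (n+1) = _) (g := fun _ => b) (fun k hk => by
      simp only [Finset.mem_Ico] at hk; simp [Nat.not_lt.mpr hk.1])]
  simp [Finset.sum_const, Nat.card_Ico, mul_comm]

theorem int_sq_ge (m : ℤ) : (0:ℚ) ≤ (m:ℚ) * m - m := by
  have h : (0:ℤ) ≤ m * m - m := by
    rcases le_or_gt 1 m with h | h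
    · nlinarith
    · have : m ≤ 0 := by omega
      nlinarith
  exact_mod_cast h

/-- For `0 ≤ i ≤ n` (with `j = n+1-i`), the glue vector `[i]` lies
in the dual lattice `A_n^#` (it is in the rational span of `A_n` and has integral
inner product with every vector of `A_n`), its norm is `Q([i]) = ij/(n+1)`, and it
has minimal norm in its coset `[i] + A_n`. -/
theorem glueA_props (n i : ℕ) (hi : i ≤ n) :
    (∑ k, glueA n i k = 0) ∧
    (∀ x, AMem n x → ∃ m : ℤ, ∑ k, glueA n i k * x k = m) ∧
    (∑ k, glueA n i k * glueA n i k = (i : ℚ) * ((n + 1 - i : ℕ) : ℚ) / (n + 1)) ∧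
    (∀ v : Fin (n + 1) → ℚ, AMem n (fun k => v k - glueA n i k) →
      ∑ k, glueA n i k * glueA n i k ≤ ∑ k, v k * v k) := by
  set j := n + 1 - i with hjdef
  have hj : j ≤ n + 1 := by omega
  have hnj : n + 1 - j = i := by omega
  have hnQ : ((n:ℚ) + 1) ≠ 0 := by positivity
  have hjQ : ((j:ℚ)) = (n:ℚ) + 1 - i := by
    rw [hjdef]; push_cast [Nat.cast_sub (by omega : i ≤ n + 1)]; ring
  set c : ℚ := (i : ℚ) / (n + 1) with hc
  set d : ℚ := -((j:ℚ)) / (n + 1) with hd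
  have hcd : d = c - 1 := by rw [hd, hc, hjQ]; field_simp; ring
  have hglue : ∀ k : Fin (n+1), glueA n i k = if (k:ℕ) < j then c else d := by
    intro k; rfl
  -- Part 1
  have part1 : ∑ k, glueA n i k = 0 := by
    simp only [hglue]
    rw [sum_ite_const' n j hj c d, hnj, hc, hd, hjQ]
    field_simp
    ring
  refine ⟨part1, ?_, ?_, ?_⟩
  · -- Part 2: integral inner products
    intro x hx
    obtain ⟨m, hm⟩ := Classical.axiomOfChoice hx.1
    refine ⟨-∑ k : Fin (n+1), (if (k:ℕ) < j then 0 else m k), ?_⟩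
    have key : ∀ k : Fin (n+1), glueA n i k * x k
        = c * x k - (if (k:ℕ) < j then 0 else x k) := by
      intro k
      rw [hglue k]
      split_ifs with h
      · ring
      · rw [hcd]; ring
    rw [Finset.sum_congr rfl (fun k _ => key k), Finset.sum_sub_distrib,
      ← Finset.mul_sum, hx.2, mul_zero, zero_sub]
    push_cast
    rw [neg_inj]
    refine Finset.sum_congr rfl fun k _ => ?_
    split_ifs with h <;> simp [hm k]
  · -- Part 3: norm
    have key : ∀ k : Fin (n+1), glueA n i k * glueA n i k
        = if (k:ℕ) < j then c * c else d * d := by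
      intro k; rw [hglue k]; split_ifs <;> ring
    rw [Finset.sum_congr rfl (fun k _ => key k), sum_ite_const' n j hj _ _, hnj,
      hc, hd, hjQ]
    field_simp
    ring
  · -- Part 4: minimality
    intro v hv
    have hsumv : ∑ k, v k = 0 := by
      have h2 := hv.2
      simp only [Finset.sum_sub_distrib, part1, sub_zero] at h2
      exact h2
    obtain ⟨m, hm⟩ := Classical.axiomOfChoice hv.1
    -- each c - v k is an integer
    have hint : ∀ k : Fin (n+1), ∃ M : ℤ, c - v k = (M:ℚ) := by
      intro k
      have hmk : v k - glueA n i k = (m k : ℚ) := hm k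
      by_cases h : (k:ℕ) < j
      · exact ⟨-m k, by rw [hglue k, if_pos h] at hmk; push_cast; linarith⟩
      · refine ⟨1 - m k, ?_⟩
        rw [hglue k, if_neg h, hcd] at hmk
        push_cast
        linarith
    -- pointwise inequality
    have hpt : ∀ k ∈ Finset.univ, c * c + (1 - 2*c) * (c - v k) ≤ v k * v k := by
      intro k _
      obtain ⟨M, hM⟩ := hint k
      have hvk : v k = c - (M:ℚ) := by linarith
      have := int_sq_ge M
      rw [hvk]
      nlinarith
    have hle := Finset.sum_le_sum hpt
    -- compute the left sum
    have hls : ∑ k : Fin (n+1), (c * c + (1 - 2*c) * (c - v k))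
        = (i:ℚ) * ((j:ℕ):ℚ) / (n+1) := by
      rw [Finset.sum_add_distrib, Finset.sum_const, Finset.card_univ, Fintype.card_fin,
        ← Finset.mul_sum, Finset.sum_sub_distrib, hsumv, sub_zero, Finset.sum_const,
        Finset.card_univ, Fintype.card_fin]
      rw [hjQ, hc]
      simp only [nsmul_eq_mul, Nat.cast_add, Nat.cast_one]
      field_simp
      ring
    calc ∑ k, glueA n i k * glueA n i k
        = (i:ℚ) * ((j:ℕ):ℚ) / (n+1) := by
          have key : ∀ k : Fin (n+1), glueA n i k * glueA n i k
              = if (k:ℕ) < j then c * c else d * d := by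
            intro k; rw [hglue k]; split_ifs <;> ring
          rw [Finset.sum_congr rfl (fun k _ => key k), sum_ite_const' n j hj _ _, hnj,
            hc, hd, hjQ]
          field_simp
          ring
      _ = ∑ k : Fin (n+1), (c * c + (1 - 2*c) * (c - v k)) := hls.symm
      _ ≤ ∑ k, v k * v k := hle
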